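/- Let n·Var(Ȳ_n) = Σ + Γ/n + o(1/n) for a stationary sequence, where Ȳ_n is the mean of n consecutive observations. Then the batch means estimator with a batches of size b (n = ab) has expectation E[Σ̂_b] = Σ + Γ/b + o(1/b); i.e., (ab/(a-1))·(Var(Ȳ_b batch mean) - Var(Ȳ_n)) = Σ + Γ/b + o(1/b). -/

import Mathlib

open Filter Asymptotics

/-- If n·Var(Ȳ_n) = Σ + Γ/n + o(1/n) (encoded by v m = m·Var(Ȳ_m)),
then the batch means estimator with a batches of size b (n = ab) has expectation
E[Σ̂_b] = (ab/(a-1))·(Var(Ȳ_b) - Var(Ȳ_n)) = Σ + Γ/b + o(1/b) as a, b → ∞. -/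
theorem batch_means_expectation_expansion (v : ℕ → ℝ) (Sig Gam : ℝ) (a b : ℕ → ℕ)
    (ha : Tendsto a atTop atTop) (hb : Tendsto b atTop atTop)
    (hv : (fun m : ℕ => v m - Sig - Gam / (m : ℝ)) =o[atTop] fun m : ℕ => ((m : ℝ))⁻¹)
    (E : ℕ → ℝ)
    (hE : ∀ n, E n = (((a n : ℝ) * (b n : ℝ)) / ((a n : ℝ) - 1)) *
        (v (b n) / (b n : ℝ) - v (a n * b n) / ((a n : ℝ) * (b n : ℝ)))) :
    (fun n => E n - Sig - Gam / (b n : ℝ)) =o[atTop] fun n => ((b n : ℝ))⁻¹ := by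
  set r : ℕ → ℝ := fun m => v m - Sig - Gam / (m : ℝ) with hr
  -- m * r m → 0
  have h1 : Tendsto (fun m : ℕ => (m : ℝ) * r m) atTop (nhds 0) := by
    have hside : ∀ᶠ m : ℕ in atTop, ((m : ℝ))⁻¹ = 0 → r m = 0 := by
      filter_upwards [eventually_ge_atTop 1] with m hm h
      have : (0:ℝ) < (m:ℝ) := by exact_mod_cast Nat.lt_of_lt_of_le Nat.zero_lt_one hm
      exact absurd h (by positivity)
    have := (isLittleO_iff_tendsto' hside).mp hv
    refine this.congr' ?_
    filter_upwards with m
    rw [div_eq_mul_inv, inv_inv, mul_comm]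
  have hab : Tendsto (fun n => a n * b n) atTop atTop := ha.atTop_mul_atTop hb
  have h2 : Tendsto (fun n => (b n : ℝ) * r (b n)) atTop (nhds 0) := h1.comp hb
  have h3 : Tendsto (fun n => ((a n * b n : ℕ) : ℝ) * r (a n * b n)) atTop (nhds 0) :=
    h1.comp hab
  have hA : Tendsto (fun n => (a n : ℝ)) atTop atTop :=
    tendsto_natCast_atTop_atTop.comp ha
  have hA1 : Tendsto (fun n => (a n : ℝ) - 1) atTop atTop :=
    tendsto_atTop_add_const_right _ (-1) hA |>.congr (fun n => by ring)
  have hAA1 : Tendsto (fun n => (a n : ℝ) * ((a n : ℝ) - 1)) atTop atTop :=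
    hA.atTop_mul_atTop₀ hA1
  have t1 : Tendsto (fun n => Gam / (a n : ℝ)) atTop (nhds 0) :=
    tendsto_const_nhds.div_atTop hA
  have t2 : Tendsto (fun n => (1 + ((a n : ℝ) - 1)⁻¹) * ((b n : ℝ) * r (b n)))
      atTop (nhds 0) := by
    have hc : Tendsto (fun n => (1:ℝ) + ((a n : ℝ) - 1)⁻¹) atTop (nhds (1 + 0)) :=
      tendsto_const_nhds.add hA1.inv_tendsto_atTop
    have := hc.mul h2
    simpa using this
  have t3 : Tendsto (fun n => ((a n : ℝ) * ((a n : ℝ) - 1))⁻¹ *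
      (((a n * b n : ℕ) : ℝ) * r (a n * b n))) atTop (nhds 0) := by
    have := hAA1.inv_tendsto_atTop.mul h3
    simpa using this
  have total : Tendsto (fun n => Gam / (a n : ℝ)
      + (1 + ((a n : ℝ) - 1)⁻¹) * ((b n : ℝ) * r (b n))
      - ((a n : ℝ) * ((a n : ℝ) - 1))⁻¹ * (((a n * b n : ℕ) : ℝ) * r (a n * b n)))
      atTop (nhds 0) := by
    have := (t1.add t2).sub t3
    simpa using this
  have hside2 : ∀ᶠ n in atTop, ((b n : ℝ))⁻¹ = 0 → E n - Sig - Gam / (b n : ℝ) = 0 := by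
    filter_upwards [hb.eventually_ge_atTop 1] with n hn h
    have : (0:ℝ) < (b n : ℝ) := by exact_mod_cast Nat.lt_of_lt_of_le Nat.zero_lt_one hn
    exact absurd h (by positivity)
  refine (isLittleO_iff_tendsto' hside2).mpr ?_
  refine total.congr' ?_
  filter_upwards [ha.eventually_ge_atTop 2, hb.eventually_ge_atTop 1] with n ha2 hb1
  have hA2 : (2:ℝ) ≤ (a n : ℝ) := by exact_mod_cast ha2
  have hB1 : (1:ℝ) ≤ (b n : ℝ) := by exact_mod_cast hb1
  have hAne : (a n : ℝ) ≠ 0 := by linarith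
  have hA1ne : (a n : ℝ) - 1 ≠ 0 := by linarith
  have hBne : (b n : ℝ) ≠ 0 := by linarith
  rw [hE]
  simp only [hr]
  push_cast
  field_simp
  ring
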